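/- The unit sphere U₄ = {x ∈ E | N(x) = 1} is equal to ⋃_{k=0}^{3} U₁ eₖ; i.e., x ∈ E satisfies N(x) = 1 if and only if exactly one coordinate xₖ of x lies in U₁ and all other coordinates are zero. -/

import Mathlib

open LaurentPolynomial

/-- `A = ℤ[z, z⁻¹]`, the Laurent polynomial ring over the integers. -/
abbrev A : Type := LaurentPolynomial ℤ

/-- The conjugation `f(z) ↦ f(z⁻¹)` on `A`. -/
noncomputable def conj : A →+* A := (LaurentPolynomial.invert (R := ℤ)).toRingEquiv.toRingHom

/-- The fixed subring `A₀ = {f ∈ A | f* = f}`. -/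
noncomputable def A0 : Subring A := RingHom.eqLocus conj (RingHom.id A)

/-- `E = A⁴`. -/
abbrev E : Type := Fin 4 → A

/-- The norm `N(x) = ∑ₖ xₖ xₖ*`. -/
noncomputable def N (x : E) : A := ∑ k, x k * conj (x k)

/-- The standard `A`-basis vectors of `E = A⁴`. -/
noncomputable def e (k : Fin 4) : E := Pi.single k 1

/-- Yang's multiplication `x ∘ y = (p, q, r, s)`. -/
noncomputable def yang (x y : E) : E :=
  ![x 0 * y 0 - x 1 * conj (y 1) - x 2 * conj (y 2) - x 3 * conj (y 3),
    x 0 * y 1 + x 1 * conj (y 0) + conj (x 2) * conj (y 3) - conj (x 3) * conj (y 2),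
    x 0 * y 2 - conj (x 1) * conj (y 3) + x 2 * conj (y 0) + conj (x 3) * conj (y 1),
    x 0 * y 3 + conj (x 1) * conj (y 2) - conj (x 2) * conj (y 1) + x 3 * conj (y 0)]

lemma mul_apply_eq (f g : A) (x : ℤ) : (f * g).coeff x = ∑ a ∈ f.coeff.support, f.coeff a * g.coeff (x - a) := by
  rw [AddMonoidAlgebra.coeff_mul, Finsupp.sum]
  refine Finset.sum_congr rfl fun a _ => ?_
  rw [Finsupp.sum]
  have : ∀ b : ℤ, (a + b = x) = (b = x - a) := by intro b; simp [eq_sub_iff_add_eq, add_comm]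
  simp only [this]
  rw [Finset.sum_ite_eq' g.coeff.support (x - a) (fun b => f.coeff a * g.coeff b)]
  by_cases h : x - a ∈ g.coeff.support
  · simp [h]
  · simp [h, Finsupp.notMem_support_iff.mp h]

/-- The constant coefficient of `f f*` is the sum of squares of the coefficients. -/
lemma mul_conj_zero (f : A) : (f * conj f).coeff 0 = ∑ a ∈ f.coeff.support, f.coeff a ^ 2 := by
  rw [mul_apply_eq]
  refine Finset.sum_congr rfl fun a _ => ?_
  have : (conj f).coeff (0 - a) = f.coeff a := by
    show (invert f).coeff (0 - a) = f.coeff a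
    rw [invert_apply]; norm_num
  rw [this, sq]

lemma Q_nonneg (f : A) : 0 ≤ ∑ a ∈ f.coeff.support, f.coeff a ^ 2 :=
  Finset.sum_nonneg fun a _ => sq_nonneg _

lemma Q_eq_zero {f : A} (h : ∑ a ∈ f.coeff.support, f.coeff a ^ 2 = 0) : f = 0 := by
  have := (Finset.sum_eq_zero_iff_of_nonneg (fun a _ => sq_nonneg (f.coeff a))).mp h
  ext a
  by_cases ha : a ∈ f.coeff.support
  · exact pow_eq_zero_iff (n := 2) (by norm_num) |>.mp (this a ha)
  · exact Finsupp.notMem_support_iff.mp ha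

lemma key (x : E) : N x = 1 ↔ ∃ k, x k * conj (x k) = 1 ∧ ∀ j, j ≠ k → x j = 0 := by
  constructor
  · intro h
    -- evaluate at 0
    have h0 : ∑ k : Fin 4, ∑ a ∈ (x k).coeff.support, (x k).coeff a ^ 2 = 1 := by
      have h1 : (1 : A).coeff 0 = 1 := by
        exact AddMonoidAlgebra.coeff_one_zero
      have := congrArg (fun f : A => f.coeff 0) h
      simp only [N] at this
      rw [AddMonoidAlgebra.coeff_sum, Finsupp.finset_sum_apply, h1] at this
      rw [← this]
      exact Finset.sum_congr rfl fun k _ => (mul_conj_zero (x k)).symm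
    set q : Fin 4 → ℤ := fun k => ∑ a ∈ (x k).coeff.support, (x k).coeff a ^ 2 with hq
    have hq0 : ∀ k, 0 ≤ q k := fun k => Q_nonneg (x k)
    -- some k has q k ≠ 0
    have hex : ∃ k, q k ≠ 0 := by
      by_contra hc
      push_neg at hc
      simp only [hc] at h0
      simp at h0
    obtain ⟨k, hk⟩ := hex
    have hrest : ∀ j, j ≠ k → q j = 0 := by
      have hsum : q k + ∑ j ∈ Finset.univ.erase k, q j = 1 := by
        rw [Finset.add_sum_erase _ q (Finset.mem_univ k)]
        exact h0
      have hk1 : 1 ≤ q k := lt_of_le_of_ne (hq0 k) (Ne.symm hk)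
      have hz : ∑ j ∈ Finset.univ.erase k, q j = 0 := by
        have hnn : 0 ≤ ∑ j ∈ Finset.univ.erase k, q j :=
          Finset.sum_nonneg fun j _ => hq0 j
        omega
      intro j hj
      exact (Finset.sum_eq_zero_iff_of_nonneg (fun j _ => hq0 j)).mp hz j
        (Finset.mem_erase.mpr ⟨hj, Finset.mem_univ j⟩)
    have hzero : ∀ j, j ≠ k → x j = 0 := fun j hj => Q_eq_zero (hrest j hj)
    refine ⟨k, ?_, hzero⟩
    calc x k * conj (x k) = ∑ j : Fin 4, x j * conj (x j) := by
          refine (Finset.sum_eq_single (f := fun j => x j * conj (x j)) k (fun j _ hj => ?_)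
            (fun hc => absurd (Finset.mem_univ k) hc)).symm
          simp only [hzero j hj]; simp
      _ = 1 := h
  · rintro ⟨k, hk, hzero⟩
    show ∑ j : Fin 4, x j * conj (x j) = 1
    rw [Finset.sum_eq_single k (fun j _ hj => by rw [hzero j hj]; simp)
      (fun hc => absurd (Finset.mem_univ k) hc)]
    exact hk

/-- The unit sphere `U₄ = {x ∈ E | N(x) = 1}` equals `⋃ₖ U₁ eₖ`; i.e. `N(x) = 1`
iff exactly one coordinate of `x` lies in `U₁` and all the others vanish. -/
theorem unit_sphere_eq :
    ({x : E | N x = 1} =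
      ⋃ k : Fin 4, (fun u : A => u • e k) '' {u : A | u * conj u = 1}) ∧
    ∀ x : E, N x = 1 ↔ ∃ k, x k * conj (x k) = 1 ∧ ∀ j, j ≠ k → x j = 0 := by
  have hsmul : ∀ (u : A) (k : Fin 4), u • e k = Pi.single k u := by
    intro u k
    funext j
    by_cases hj : j = k <;> simp [e, hj, Pi.single_apply]
  constructor
  · ext x
    simp only [Set.mem_setOf_eq, Set.mem_iUnion, Set.mem_image, key]
    constructor
    · rintro ⟨k, hk, hzero⟩
      refine ⟨k, x k, hk, ?_⟩
      rw [hsmul]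
      funext j
      by_cases hj : j = k <;> simp [hj, Pi.single_apply, hzero j]
    · rintro ⟨k, u, hu, rfl⟩
      rw [hsmul]
      exact ⟨k, by simpa using hu, fun j hj => by simp [Pi.single_apply, hj]⟩
  · exact key
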